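/- Let $(a_n)$ be a convex, decreasing, positive sequence with $a_n \log n = O(1)$, and $f$ as in the standard construction with Fejér kernels so that $\hat f(n) = a_{|n|}$. Then the sequence $N \mapsto \int_{-1/2}^{1/2} |S_N(f,t)|\,dt$ is bounded. -/

import Mathlib

open Real Set Finset Filter Topology MeasureTheory

/-- The `j`th Fejér kernel. -/
noncomputable def fejer (j : ℕ) (t : ℝ) : ℝ :=
  ∑ n ∈ Finset.Icc (-(j : ℤ)) (j : ℤ),
    (1 - |(n : ℝ)| / (j + 1)) * Real.cos (2 * Real.pi * n * t)

/-- The `N`th Dirichlet kernel. -/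
noncomputable def dir (N : ℕ) (t : ℝ) : ℝ :=
  1 + 2 * ∑ n ∈ Finset.Icc 1 N, Real.cos (2 * Real.pi * n * t)


lemma dir_continuous (N : ℕ) : Continuous (dir N) := by
  unfold dir; fun_prop

lemma fejer_continuous (j : ℕ) : Continuous (fejer j) := by
  unfold fejer; fun_prop

lemma Icc_nat_succ (N : ℕ) : Finset.Icc 1 (N + 1) = insert (N + 1) (Finset.Icc 1 N) := by
  ext n; simp [Finset.mem_Icc]; omega

lemma dir_succ (N : ℕ) (t : ℝ) :
    dir (N + 1) t = dir N t + 2 * Real.cos (2 * Real.pi * (N + 1) * t) := by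
  have h : (N + 1 : ℕ) ∉ Finset.Icc 1 N := by simp
  simp only [dir, Icc_nat_succ, Finset.sum_insert h]
  push_cast
  ring

lemma dir_mul_sin (N : ℕ) (t : ℝ) :
    dir N t * Real.sin (Real.pi * t) = Real.sin ((2 * N + 1) * (Real.pi * t)) := by
  induction N with
  | zero => simp [dir]
  | succ N ih =>
    rw [dir_succ]
    set x := Real.pi * t with hx
    set A := 2 * Real.pi * ((N : ℝ) + 1) * t with hA
    have key : 2 * Real.cos A * Real.sin x = Real.sin (A + x) - Real.sin (A - x) := by
      rw [Real.sin_add, Real.sin_sub]; ring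
    have e1 : A + x = (2 * ((N : ℝ) + 1) + 1) * x := by rw [hA, hx]; ring
    have e2 : A - x = (2 * (N : ℝ) + 1) * x := by rw [hA, hx]; ring
    rw [e1, e2] at key
    push_cast
    linear_combination ih + key

lemma sin_sq_diff (A B : ℝ) :
    Real.sin (A + B) * Real.sin (A - B) = Real.sin A ^ 2 - Real.sin B ^ 2 := by
  rw [Real.sin_add, Real.sin_sub]
  linear_combination (Real.sin A ^ 2) * (Real.sin_sq_add_cos_sq B) -
    (Real.sin B ^ 2) * (Real.sin_sq_add_cos_sq A)

lemma sum_dir_sq (j : ℕ) (t : ℝ) :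
    (∑ m ∈ Finset.range (j + 1), dir m t) * Real.sin (Real.pi * t) ^ 2 =
      Real.sin (((j : ℝ) + 1) * (Real.pi * t)) ^ 2 := by
  induction j with
  | zero => simp [dir]
  | succ j ih =>
    rw [Finset.sum_range_succ, add_mul, ih]
    set x := Real.pi * t with hx
    have h1 : dir (j + 1) t * Real.sin x = Real.sin ((2 * ((j:ℕ)+1) + 1) * x) := by
      exact_mod_cast dir_mul_sin (j + 1) t
    have h2 := sin_sq_diff (((j : ℝ) + 1 + 1) * x) (((j : ℝ) + 1) * x)
    have e1 : ((j : ℝ) + 1 + 1) * x + ((j : ℝ) + 1) * x = (2 * ((j:ℝ)+1) + 1) * x := by ring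
    have e2 : ((j : ℝ) + 1 + 1) * x - ((j : ℝ) + 1) * x = x := by ring
    rw [e1, e2] at h2
    push_cast at h1 ⊢
    linear_combination Real.sin x * h1 + h2


lemma sum_symm (j : ℕ) (g : ℤ → ℝ) (he : ∀ n : ℤ, g (-n) = g n) :
    ∑ n ∈ Finset.Icc (-(j : ℤ)) (j : ℤ), g n
      = g 0 + 2 * ∑ n ∈ Finset.Icc 1 j, g (n : ℤ) := by
  induction j with
  | zero => simp
  | succ j ih =>
    have hs : Finset.Icc (-((j : ℤ) + 1)) ((j : ℤ) + 1)
        = insert (-((j : ℤ) + 1)) (insert ((j : ℤ) + 1) (Finset.Icc (-(j : ℤ)) (j : ℤ))) := by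
      ext n; simp [Finset.mem_Icc]; omega
    have h1 : ((j : ℤ) + 1) ∉ Finset.Icc (-(j : ℤ)) (j : ℤ) := by
      simp [Finset.mem_Icc]; try omega
    have h2 : (-((j : ℤ) + 1)) ∉ insert ((j : ℤ) + 1) (Finset.Icc (-(j : ℤ)) (j : ℤ)) := by
      simp [Finset.mem_Icc]; try omega
    have hn : Finset.Icc 1 (j + 1) = insert (j + 1) (Finset.Icc 1 j) := by
      ext n; simp [Finset.mem_Icc]; omega
    have h3 : (j + 1 : ℕ) ∉ Finset.Icc 1 j := by simp
    push_cast
    rw [hs, Finset.sum_insert h2, Finset.sum_insert h1, ih, hn, Finset.sum_insert h3]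
    have := he ((j : ℤ) + 1)
    push_cast at this ⊢
    rw [this]
    ring

lemma fejer_eq_dir_sum (j : ℕ) (t : ℝ) :
    ((j : ℝ) + 1) * fejer j t = ∑ m ∈ Finset.range (j + 1), dir m t := by
  have hg : ∀ n : ℤ,
      (((j : ℝ) + 1) - |(n : ℝ)|) * Real.cos (2 * Real.pi * n * t)
        = (((j : ℝ) + 1) - |((-n : ℤ) : ℝ)|) * Real.cos (2 * Real.pi * ((-n : ℤ) : ℝ) * t) := by
    intro n
    have e : 2 * Real.pi * ((-n : ℤ) : ℝ) * t = -(2 * Real.pi * (n : ℝ) * t) := by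
      push_cast; ring
    rw [e, Real.cos_neg]
    push_cast
    rw [abs_neg]
  have lhs_eq : ((j : ℝ) + 1) * fejer j t
      = ∑ n ∈ Finset.Icc (-(j : ℤ)) (j : ℤ),
          (((j : ℝ) + 1) - |(n : ℝ)|) * Real.cos (2 * Real.pi * n * t) := by
    rw [fejer, Finset.mul_sum]
    refine Finset.sum_congr rfl fun n _ => ?_
    have hj : ((j : ℝ) + 1) ≠ 0 := by positivity
    field_simp
    try ring
  rw [lhs_eq, sum_symm j _ (fun n => (hg n).symm)]
  -- LHS now: g 0 + 2 * ∑ n ∈ Icc 1 j, ((j+1) - n) * cos(2πnt)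
  have rhs_eq : ∑ m ∈ Finset.range (j + 1), dir m t
      = ((j : ℝ) + 1) + 2 * ∑ n ∈ Finset.Icc 1 j,
          (((j : ℝ) + 1) - (n : ℝ)) * Real.cos (2 * Real.pi * n * t) := by
    simp only [dir, Finset.sum_add_distrib, Finset.sum_const, Finset.card_range, nsmul_eq_mul,
      mul_one, ← Finset.mul_sum]
    congr 1
    · push_cast; ring
    congr 1
    rw [Finset.sum_comm' (t' := Finset.Icc 1 j) (s' := fun n => Finset.Icc n j)
      (by intro m n; simp [Finset.mem_Icc, Finset.mem_range]; omega)]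
    refine Finset.sum_congr rfl fun n hn => ?_
    rw [Finset.sum_const, Nat.card_Icc, nsmul_eq_mul]
    simp only [Finset.mem_Icc] at hn
    congr 1
    have : (j + 1 - n : ℕ) = j + 1 - n := rfl
    push_cast [Nat.cast_sub (by omega : n ≤ j + 1)]
    ring
  rw [rhs_eq]
  simp only [Int.cast_zero, abs_zero, Int.cast_natCast]
  norm_num


lemma fejer_nonneg (j : ℕ) (t : ℝ) : 0 ≤ fejer j t := by
  have hj : (0 : ℝ) < (j : ℝ) + 1 := by positivity
  by_cases hs : Real.sin (Real.pi * t) = 0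
  · -- t is an integer
    obtain ⟨k, hk⟩ := Real.sin_eq_zero_iff.1 hs
    have hpi : (Real.pi : ℝ) ≠ 0 := Real.pi_ne_zero
    have ht : t = (k : ℝ) := by
      have h' : Real.pi * (k : ℝ) = Real.pi * t := by linarith [hk]
      exact (mul_left_cancel₀ Real.pi_ne_zero h').symm
    rw [fejer]
    refine Finset.sum_nonneg fun n hn => ?_
    have hcos : Real.cos (2 * Real.pi * (n : ℝ) * t) = 1 := by
      rw [ht]
      have := Real.cos_int_mul_two_pi (n * k)
      have e : ((n * k : ℤ) : ℝ) * (2 * Real.pi) = 2 * Real.pi * (n : ℝ) * (k : ℝ) := by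
        push_cast; ring
      rw [e] at this
      exact this
    rw [hcos, mul_one, sub_nonneg, div_le_one hj]
    simp only [Finset.mem_Icc] at hn
    have : |n| ≤ (j : ℤ) := abs_le.2 hn
    calc |(n : ℝ)| = ((|n| : ℤ) : ℝ) := by push_cast; rfl
      _ ≤ (j : ℝ) := by exact_mod_cast this
      _ ≤ (j : ℝ) + 1 := by linarith
  · have hs2 : 0 < Real.sin (Real.pi * t) ^ 2 := by positivity
    have h := sum_dir_sq j t
    have hsum : 0 ≤ ∑ m ∈ Finset.range (j + 1), dir m t := by
      nlinarith [sq_nonneg (Real.sin (((j : ℝ) + 1) * (Real.pi * t)))]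
    have := fejer_eq_dir_sum j t
    nlinarith

lemma integral_cos_int (n : ℤ) (hn : n ≠ 0) :
    ∫ t in (-(1/2) : ℝ)..(1/2), Real.cos (2 * Real.pi * (n : ℝ) * t) = 0 := by
  have hne : (n : ℝ) ≠ 0 := Int.cast_ne_zero.2 hn
  have hc : (2 * Real.pi * (n : ℝ)) ≠ 0 := by positivity
  rw [intervalIntegral.integral_comp_mul_left Real.cos hc, integral_cos]
  have e1 : 2 * Real.pi * (n : ℝ) * (1/2) = (n : ℝ) * Real.pi := by ring
  have e2 : 2 * Real.pi * (n : ℝ) * (-(1/2)) = ((-n : ℤ) : ℝ) * Real.pi := by push_cast; ring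
  rw [e1, e2, Real.sin_int_mul_pi]
  have := Real.sin_int_mul_pi (-n)
  rw [this]
  simp

lemma setIcc_eq (g : ℝ → ℝ) :
    ∫ t in Set.Icc (-(1/2) : ℝ) (1/2), g t = ∫ t in (-(1/2) : ℝ)..(1/2), g t := by
  rw [intervalIntegral.integral_of_le (by norm_num), MeasureTheory.integral_Icc_eq_integral_Ioc]


lemma integral_fejer (j : ℕ) :
    ∫ t in (-(1/2) : ℝ)..(1/2), fejer j t = 1 := by
  have hint : ∀ n : ℤ, IntervalIntegrable
      (fun t => (1 - |(n : ℝ)| / (j + 1)) * Real.cos (2 * Real.pi * n * t))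
      MeasureTheory.volume (-(1/2) : ℝ) (1/2) := by
    intro n
    apply Continuous.intervalIntegrable
    fun_prop
  rw [show (fun t => fejer j t) = fejer j from rfl]
  unfold fejer
  rw [intervalIntegral.integral_finset_sum (fun n _ => hint n)]
  rw [Finset.sum_eq_single (0 : ℤ)]
  · simp only [Int.cast_zero, abs_zero, zero_div, sub_zero, one_mul, mul_zero, zero_mul]
    norm_num
  · intro n _ hn
    rw [intervalIntegral.integral_const_mul, integral_cos_int n hn, mul_zero]
  · intro h
    simp at h
lemma dir_even (N : ℕ) (t : ℝ) : dir N (-t) = dir N t := by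
  unfold dir
  congr 2
  refine Finset.sum_congr rfl fun n _ => ?_
  rw [show 2 * Real.pi * (n : ℝ) * (-t) = -(2 * Real.pi * (n : ℝ) * t) by ring, Real.cos_neg]


lemma dir_abs_le (N : ℕ) (t : ℝ) : |dir N t| ≤ 2 * N + 1 := by
  unfold dir
  calc |1 + 2 * ∑ n ∈ Finset.Icc 1 N, Real.cos (2 * Real.pi * n * t)|
      ≤ 1 + |2 * ∑ n ∈ Finset.Icc 1 N, Real.cos (2 * Real.pi * n * t)| := by
        calc _ ≤ |(1:ℝ)| + |2 * ∑ n ∈ Finset.Icc 1 N, Real.cos (2 * Real.pi * n * t)| :=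
          abs_add_le _ _
        _ = _ := by rw [abs_one]
    _ ≤ 1 + 2 * (N : ℝ) := by
        rw [abs_mul, abs_two]
        have : |∑ n ∈ Finset.Icc 1 N, Real.cos (2 * Real.pi * n * t)| ≤ (N : ℝ) := by
          calc |∑ n ∈ Finset.Icc 1 N, Real.cos (2 * Real.pi * n * t)|
              ≤ ∑ n ∈ Finset.Icc 1 N, |Real.cos (2 * Real.pi * n * t)| :=
                Finset.abs_sum_le_sum_abs _ _
            _ ≤ ∑ n ∈ Finset.Icc 1 N, (1:ℝ) :=
                Finset.sum_le_sum fun n _ => Real.abs_cos_le_one _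
            _ = (N : ℝ) := by simp [Nat.card_Icc]
        linarith
    _ = 2 * N + 1 := by ring

lemma dir_abs_le' (N : ℕ) {t : ℝ} (h0 : 0 < t) (h2 : t ≤ 1/2) :
    |dir N t| ≤ 1 / (2 * t) := by
  have hpt0 : 0 ≤ Real.pi * t := by positivity
  have hpt2 : Real.pi * t ≤ Real.pi / 2 := by
    rw [div_eq_mul_inv]
    calc Real.pi * t ≤ Real.pi * (1/2) := by
          apply mul_le_mul_of_nonneg_left h2 Real.pi_pos.le
      _ = Real.pi * 2⁻¹ := by norm_num
  have hsin : 2 * t ≤ Real.sin (Real.pi * t) := by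
    have := Real.mul_le_sin hpt0 hpt2
    calc 2 * t = 2 / Real.pi * (Real.pi * t) := by
          field_simp
      _ ≤ Real.sin (Real.pi * t) := this
  have h2t : (0:ℝ) < 2 * t := by linarith
  rw [le_div_iff₀ h2t]
  calc |dir N t| * (2 * t) ≤ |dir N t| * Real.sin (Real.pi * t) := by
        apply mul_le_mul_of_nonneg_left hsin (abs_nonneg _)
    _ = |dir N t * Real.sin (Real.pi * t)| := by
        rw [abs_mul, abs_of_nonneg (by linarith : 0 ≤ Real.sin (Real.pi * t))]
    _ = |Real.sin ((2 * N + 1) * (Real.pi * t))| := by rw [dir_mul_sin]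
    _ ≤ 1 := Real.abs_sin_le_one _

lemma dirL1 (N : ℕ) (hN : 1 ≤ N) :
    ∫ t in (-(1/2) : ℝ)..(1/2), |dir N t| ≤ 2 + Real.log (2 * N + 1) := by
  set g : ℝ → ℝ := fun t => |dir N t| with hg
  have hgc : Continuous g := (dir_continuous N).abs
  have hint : ∀ a b : ℝ, IntervalIntegrable g MeasureTheory.volume a b :=
    fun a b => hgc.intervalIntegrable a b
  have hNr : (1:ℝ) ≤ (N:ℝ) := by exact_mod_cast hN
  set δ : ℝ := 1 / (2 * N + 1) with hδ
  have hδ0 : 0 < δ := by positivity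
  have hδhalf : δ ≤ 1/2 := by
    rw [hδ, div_le_div_iff₀ (by positivity) (by norm_num)]
    linarith
  -- even function: integral over [-1/2, 0] equals integral over [0, 1/2]
  have heven : ∫ t in (-(1/2) : ℝ)..(0:ℝ), g t = ∫ t in (0:ℝ)..(1/2 : ℝ), g t := by
    have := intervalIntegral.integral_comp_neg (a := (0:ℝ)) (b := (1/2:ℝ)) (f := g)
    simp only [neg_zero] at this
    rw [← this]
    refine intervalIntegral.integral_congr fun t _ => ?_
    simp [hg, dir_even]
  have hsplit : ∫ t in (-(1/2) : ℝ)..(1/2 : ℝ), g t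
      = (∫ t in (-(1/2) : ℝ)..(0:ℝ), g t) + ∫ t in (0:ℝ)..(1/2 : ℝ), g t :=
    (intervalIntegral.integral_add_adjacent_intervals (hint _ _) (hint _ _)).symm
  have hsplit2 : ∫ t in (0:ℝ)..(1/2 : ℝ), g t
      = (∫ t in (0:ℝ)..δ, g t) + ∫ t in δ..(1/2 : ℝ), g t :=
    (intervalIntegral.integral_add_adjacent_intervals (hint _ _) (hint _ _)).symm
  have h1 : ∫ t in (0:ℝ)..δ, g t ≤ 1 := by
    calc ∫ t in (0:ℝ)..δ, g t ≤ ∫ t in (0:ℝ)..δ, (2 * (N:ℝ) + 1) := by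
          apply intervalIntegral.integral_mono_on hδ0.le (hint _ _)
            (intervalIntegrable_const)
          intro x _
          exact dir_abs_le N x
      _ = δ * (2 * (N:ℝ) + 1) := by rw [intervalIntegral.integral_const, smul_eq_mul]; ring
      _ = 1 := by rw [hδ]; field_simp
  have h2 : ∫ t in δ..(1/2 : ℝ), g t ≤ (1/2) * Real.log (2 * N + 1) := by
    have hmono : ∫ t in δ..(1/2 : ℝ), g t ≤ ∫ t in δ..(1/2 : ℝ), 1 / (2 * t) := by
      apply intervalIntegral.integral_mono_on hδhalf (hint _ _)
      · apply ContinuousOn.intervalIntegrable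
        apply ContinuousOn.div continuousOn_const (by fun_prop)
        intro x hx
        rw [Set.uIcc_of_le hδhalf] at hx
        have hx0 : 0 < x := lt_of_lt_of_le hδ0 hx.1
        positivity
      · intro x hx
        exact dir_abs_le' N (lt_of_lt_of_le hδ0 hx.1) hx.2
    have hval : ∫ t in δ..(1/2 : ℝ), 1 / (2 * t) = (1/2) * Real.log ((1/2) / δ) := by
      have : ∀ t : ℝ, 1 / (2 * t) = (1/2) * (1 / t) := fun t => by
        rcases eq_or_ne t 0 with h | h
        · simp [h]
        · field_simp
      simp_rw [this]
      rw [intervalIntegral.integral_const_mul, integral_one_div]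
      intro h
      rw [Set.uIcc_of_le hδhalf] at h
      exact absurd h.1 (by linarith)
    have hlog : Real.log ((1/2) / δ) ≤ Real.log (2 * N + 1) := by
      apply Real.log_le_log (by positivity)
      rw [hδ]
      rw [div_div_eq_mul_div, div_le_iff₀ (by norm_num)]
      ring_nf
      nlinarith
    calc ∫ t in δ..(1/2 : ℝ), g t ≤ (1/2) * Real.log ((1/2) / δ) := by rw [← hval]; exact hmono
      _ ≤ (1/2) * Real.log (2 * N + 1) := by linarith
  have hlogpos : 0 ≤ Real.log (2 * N + 1) := by
    apply Real.log_nonneg; linarith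
  rw [hsplit, heven, hsplit2]
  linarith


theorem stmt_10 (a : ℕ → ℝ)
    (hpos : ∀ n, 0 < a n)
    (hconv : ∀ n, 0 ≤ a n - 2 * a (n + 1) + a (n + 2))
    (hdec : Antitone a)
    (hlog : ∃ M : ℝ, ∀ n : ℕ, |a n * Real.log n| ≤ M)
    (f : ℝ → ℝ)
    (hf : ∀ t, f t = ∑' j : ℕ, (j + 1 : ℝ) * (a j - 2 * a (j + 1) + a (j + 2)) * fejer j t)
    -- the `N`th symmetric Fourier partial sum of `f`, whose Fourier coefficients are `a_{|n|}`
    (S : ℕ → ℝ → ℝ)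
    (hS : ∀ N t, S N t = a 0 + 2 * ∑ n ∈ Finset.Icc 1 N, a n * Real.cos (2 * Real.pi * n * t)) :
    ∃ B : ℝ, ∀ N : ℕ,
      (∫ t in Set.Icc (-(1/2) : ℝ) (1/2), |S N t|) ≤ B := by
  classical
  obtain ⟨M, hM⟩ := hlog
  have hM0 : 0 ≤ M := le_trans (abs_nonneg _) (hM 0)
  set b : ℕ → ℝ := fun i => a i - a (i + 1) with hbdef
  have hb0 : ∀ i, 0 ≤ b i := fun i => by
    have := hdec (Nat.le_succ i); simp [hbdef]; linarith
  have hbd : ∀ i, b (i + 1) ≤ b i := fun i => by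
    have := hconv i; simp [hbdef]; linarith
  have hbmono : Antitone b := antitone_nat_of_succ_le hbd
  -- the building block `e`
  set e : ℕ → ℝ → ℝ := fun n t => if n = 0 then 1 else 2 * Real.cos (2 * Real.pi * n * t)
    with hedef
  have hSe : ∀ N t, S N t = ∑ n ∈ Finset.range (N + 1), a n * e n t := by
    intro N t
    rw [hS, Finset.sum_range_succ']
    have h0 : a 0 * e 0 t = a 0 := by simp [hedef]
    rw [h0]
    have hIcc : Finset.Icc 1 N = Finset.Ico 1 (N + 1) := by ext; simp
    rw [hIcc, Finset.sum_Ico_eq_sum_range]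
    simp only [Nat.add_sub_cancel]
    rw [Finset.mul_sum]
    rw [add_comm]
    congr 1
    refine Finset.sum_congr rfl fun i _ => ?_
    have : (1 + i : ℕ) = i + 1 := by omega
    rw [this]
    simp [hedef]
    ring
  have hedir : ∀ K t, ∑ n ∈ Finset.range (K + 1), e n t = dir K t := by
    intro K t
    rw [Finset.sum_range_succ']
    have h0 : e 0 t = 1 := by simp [hedef]
    rw [h0, dir]
    have hIcc : Finset.Icc 1 K = Finset.Ico 1 (K + 1) := by ext; simp
    rw [hIcc, Finset.sum_Ico_eq_sum_range]
    simp only [Nat.add_sub_cancel]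
    rw [Finset.mul_sum, add_comm]
    congr 1
    refine Finset.sum_congr rfl fun i _ => ?_
    have : (1 + i : ℕ) = i + 1 := by omega
    rw [this]
    simp [hedef]
  -- first Abel summation
  have h1 : ∀ N t, S N t = (∑ i ∈ Finset.range N, b i * dir i t) + a N * dir N t := by
    intro N t
    have habel := Finset.sum_range_by_parts a (fun n => e n t) (N + 1)
    simp only [smul_eq_mul, Nat.add_sub_cancel] at habel
    rw [hSe N t, habel, hedir N t]
    have : ∀ i ∈ Finset.range N, (a (i + 1) - a i) * (∑ j ∈ Finset.range (i + 1), e j t)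
        = -(b i * dir i t) := by
      intro i _
      rw [hedir i t]
      simp [hbdef]; ring
    rw [Finset.sum_congr rfl this, Finset.sum_neg_distrib]
    ring
  -- second Abel summation, for `N ≥ 1`
  have h2 : ∀ N, 1 ≤ N → ∀ t, (∑ i ∈ Finset.range N, b i * dir i t)
      = (∑ i ∈ Finset.range (N - 1), ((b i - b (i + 1)) * ((i : ℝ) + 1)) * fejer i t)
        + (b (N - 1) * (N : ℝ)) * fejer (N - 1) t := by
    intro N hN t
    have habel := Finset.sum_range_by_parts b (fun n => dir n t) N
    simp only [smul_eq_mul] at habel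
    rw [habel]
    have hN' : N = (N - 1) + 1 := by omega
    have hend : ∑ i ∈ Finset.range N, dir i t = (N : ℝ) * fejer (N - 1) t := by
      conv_lhs => rw [hN']
      rw [← fejer_eq_dir_sum (N - 1) t]
      congr 1
      push_cast [Nat.cast_sub hN]
      ring
    rw [hend]
    have : ∀ i ∈ Finset.range (N - 1), (b (i + 1) - b i) * (∑ j ∈ Finset.range (i + 1), dir j t)
        = -(((b i - b (i + 1)) * ((i : ℝ) + 1)) * fejer i t) := by
      intro i _
      rw [← fejer_eq_dir_sum i t]
      ring
    rw [Finset.sum_congr rfl this, Finset.sum_neg_distrib]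
    ring
  -- numeric bounds
  have hsb : ∀ K, ∑ i ∈ Finset.range K, b i = a 0 - a K := by
    intro K
    simpa [hbdef] using Finset.sum_range_sub' a K
  have key1 : ∀ K, ∑ i ∈ Finset.range K, (b i - b (i + 1)) * ((i : ℝ) + 1) ≤ a 0 := by
    intro K
    have hid : ∀ K, ∑ i ∈ Finset.range K, (b i - b (i + 1)) * ((i : ℝ) + 1)
        = (∑ i ∈ Finset.range K, b i) - (K : ℝ) * b K := by
      intro K
      induction K with
      | zero => simp
      | succ K ih =>
        rw [Finset.sum_range_succ, ih, Finset.sum_range_succ]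
        push_cast
        ring
    rw [hid K, hsb K]
    have h1 : 0 ≤ b K := hb0 K
    have h2 : 0 < a K := hpos K
    have h3 : (0:ℝ) ≤ (K:ℝ) := Nat.cast_nonneg K
    nlinarith
  have key2 : ∀ N, 1 ≤ N → b (N - 1) * (N : ℝ) ≤ a 0 := by
    intro N hN
    have : (N : ℝ) * b (N - 1) = ∑ _i ∈ Finset.range N, b (N - 1) := by
      rw [Finset.sum_const, Finset.card_range, nsmul_eq_mul]
    have hle : ∑ _i ∈ Finset.range N, b (N - 1) ≤ ∑ i ∈ Finset.range N, b i := by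
      refine Finset.sum_le_sum fun i hi => ?_
      apply hbmono
      simp only [Finset.mem_range] at hi
      omega
    rw [hsb N] at hle
    have := hpos N
    nlinarith [this, hle, this]
  have key3 : ∀ N : ℕ, 1 ≤ N → a N * (2 + Real.log (2 * N + 1))
      ≤ 2 * a 0 + (a 0 * Real.log 3 + M) := by
    intro N hN
    have haN0 : 0 < a N := hpos N
    have haN : a N ≤ a 0 := hdec (Nat.zero_le N)
    have hNr : (1:ℝ) ≤ (N:ℝ) := by exact_mod_cast hN
    have hl1 : Real.log (2 * N + 1) ≤ Real.log 3 + Real.log N := by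
      rw [← Real.log_mul (by norm_num) (by linarith : (N:ℝ) ≠ 0)]
      apply Real.log_le_log (by linarith)
      linarith
    have hl3 : (0:ℝ) ≤ Real.log 3 := Real.log_nonneg (by norm_num)
    have hlN : 0 ≤ Real.log N := Real.log_nonneg hNr
    have hMN : a N * Real.log N ≤ M := le_trans (le_abs_self _) (hM N)
    have hlog0 : 0 ≤ Real.log (2 * N + 1) := Real.log_nonneg (by linarith)
    calc a N * (2 + Real.log (2 * N + 1))
        = 2 * a N + a N * Real.log (2 * N + 1) := by ring
      _ ≤ 2 * a 0 + a N * (Real.log 3 + Real.log N) := by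
          have : a N * Real.log (2 * N + 1) ≤ a N * (Real.log 3 + Real.log N) :=
            mul_le_mul_of_nonneg_left hl1 haN0.le
          linarith
      _ = 2 * a 0 + (a N * Real.log 3 + a N * Real.log N) := by ring
      _ ≤ 2 * a 0 + (a 0 * Real.log 3 + M) := by
          have : a N * Real.log 3 ≤ a 0 * Real.log 3 :=
            mul_le_mul_of_nonneg_right haN hl3
          linarith
  refine ⟨a 0 + a 0 + (2 * a 0 + (a 0 * Real.log 3 + M)), ?_⟩
  intro N
  rcases Nat.eq_zero_or_pos N with rfl | hN
  · -- N = 0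
    have : ∀ t : ℝ, |S 0 t| = a 0 := by
      intro t
      rw [hS]
      simp [abs_of_pos (hpos 0)]
    calc ∫ t in Set.Icc (-(1/2) : ℝ) (1/2), |S 0 t|
        = ∫ _t in Set.Icc (-(1/2) : ℝ) (1/2), a 0 := by
          apply MeasureTheory.integral_congr_ae
          filter_upwards with t
          exact this t
      _ = a 0 := by
          rw [MeasureTheory.setIntegral_const, Real.volume_real_Icc]
          norm_num
      _ ≤ _ := by
          have h3 : (0:ℝ) ≤ Real.log 3 := Real.log_nonneg (by norm_num)
          nlinarith [hpos 0, hM0]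
  · -- N ≥ 1
    set P : ℝ → ℝ := fun t =>
      (∑ i ∈ Finset.range (N - 1), ((b i - b (i + 1)) * ((i : ℝ) + 1)) * fejer i t)
        + (b (N - 1) * (N : ℝ)) * fejer (N - 1) t + a N * |dir N t| with hPdef
    have hSc : Continuous (fun t => |S N t|) := by
      have : (fun t => |S N t|) = fun t =>
          |a 0 + 2 * ∑ n ∈ Finset.Icc 1 N, a n * Real.cos (2 * Real.pi * n * t)| := by
        funext t; rw [hS]
      rw [this]
      fun_prop
    have hPc : Continuous P := by
      apply Continuous.add
      apply Continuous.add
      · exact continuous_finset_sum _ fun i _ => continuous_const.mul (fejer_continuous i)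
      · exact continuous_const.mul (fejer_continuous (N - 1))
      · exact continuous_const.mul ((dir_continuous N).abs)
    have hpt : ∀ t, |S N t| ≤ P t := by
      intro t
      rw [h1 N t, h2 N hN t, hPdef]
      have hQ1 : 0 ≤ ∑ i ∈ Finset.range (N - 1),
          ((b i - b (i + 1)) * ((i : ℝ) + 1)) * fejer i t := by
        refine Finset.sum_nonneg fun i _ => ?_
        have hc : 0 ≤ b i - b (i + 1) := by
          have := hconv i; simp [hbdef]; linarith
        have : (0:ℝ) ≤ (i : ℝ) + 1 := by positivity
        exact mul_nonneg (mul_nonneg hc this) (fejer_nonneg i t)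
      have hQ2 : 0 ≤ (b (N - 1) * (N : ℝ)) * fejer (N - 1) t :=
        mul_nonneg (mul_nonneg (hb0 _) (Nat.cast_nonneg N)) (fejer_nonneg _ t)
      have habs3 : |(∑ i ∈ Finset.range (N - 1),
            ((b i - b (i + 1)) * ((i : ℝ) + 1)) * fejer i t)
          + (b (N - 1) * (N : ℝ)) * fejer (N - 1) t + a N * dir N t|
          ≤ (∑ i ∈ Finset.range (N - 1),
            ((b i - b (i + 1)) * ((i : ℝ) + 1)) * fejer i t)
          + (b (N - 1) * (N : ℝ)) * fejer (N - 1) t + |a N * dir N t| := by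
        calc _ ≤ |(∑ i ∈ Finset.range (N - 1),
            ((b i - b (i + 1)) * ((i : ℝ) + 1)) * fejer i t)
          + (b (N - 1) * (N : ℝ)) * fejer (N - 1) t| + |a N * dir N t| := abs_add_le _ _
          _ ≤ _ := by
            have := abs_of_nonneg (add_nonneg hQ1 hQ2)
            rw [this]
      have : |a N * dir N t| = a N * |dir N t| := by
        rw [abs_mul, abs_of_pos (hpos N)]
      rw [this] at habs3
      beta_reduce
      exact habs3
    have hintS : IntervalIntegrable (fun t => |S N t|) MeasureTheory.volume (-(1/2) : ℝ) (1/2) :=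
      hSc.intervalIntegrable _ _
    have hintP : IntervalIntegrable P MeasureTheory.volume (-(1/2) : ℝ) (1/2) :=
      hPc.intervalIntegrable _ _
    have hintdir : IntervalIntegrable (fun t => |dir N t|) MeasureTheory.volume (-(1/2) : ℝ) (1/2) :=
      ((dir_continuous N).abs).intervalIntegrable _ _
    have hPint : ∫ t in (-(1/2) : ℝ)..(1/2), P t
        = (∑ i ∈ Finset.range (N - 1), (b i - b (i + 1)) * ((i : ℝ) + 1))
          + b (N - 1) * (N : ℝ) + a N * ∫ t in (-(1/2) : ℝ)..(1/2), |dir N t| := by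
      rw [hPdef]
      rw [intervalIntegral.integral_add
        (f := fun t => (∑ i ∈ Finset.range (N - 1), ((b i - b (i + 1)) * ((i : ℝ) + 1)) * fejer i t)
          + (b (N - 1) * (N : ℝ)) * fejer (N - 1) t) (g := fun t => a N * |dir N t|) (((Continuous.add
        (continuous_finset_sum _ fun i _ => continuous_const.mul (fejer_continuous i))
        (continuous_const.mul (fejer_continuous (N - 1))))).intervalIntegrable _ _)
        ((continuous_const.mul ((dir_continuous N).abs)).intervalIntegrable _ _)]
      rw [intervalIntegral.integral_add
        (f := fun t => ∑ i ∈ Finset.range (N - 1), ((b i - b (i + 1)) * ((i : ℝ) + 1)) * fejer i t)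
        (g := fun t => (b (N - 1) * (N : ℝ)) * fejer (N - 1) t)
        ((continuous_finset_sum _ fun i _ => continuous_const.mul (fejer_continuous i)).intervalIntegrable _ _)
        ((continuous_const.mul (fejer_continuous (N - 1))).intervalIntegrable _ _)]
      rw [intervalIntegral.integral_finset_sum
        (f := fun i t => ((b i - b (i + 1)) * ((i : ℝ) + 1)) * fejer i t) (fun i _ => (continuous_const.mul (fejer_continuous i)).intervalIntegrable _ _)]
      rw [intervalIntegral.integral_const_mul, integral_fejer, mul_one,
        intervalIntegral.integral_const_mul]
      congr 1
      congr 1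
      refine Finset.sum_congr rfl fun i _ => ?_
      rw [intervalIntegral.integral_const_mul, integral_fejer, mul_one]
    calc ∫ t in Set.Icc (-(1/2) : ℝ) (1/2), |S N t|
        = ∫ t in (-(1/2) : ℝ)..(1/2), |S N t| := setIcc_eq _
      _ ≤ ∫ t in (-(1/2) : ℝ)..(1/2), P t := by
          apply intervalIntegral.integral_mono_on (by norm_num) hintS hintP
          exact fun x _ => hpt x
      _ = (∑ i ∈ Finset.range (N - 1), (b i - b (i + 1)) * ((i : ℝ) + 1))
          + b (N - 1) * (N : ℝ) + a N * ∫ t in (-(1/2) : ℝ)..(1/2), |dir N t| := hPint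
      _ ≤ a 0 + a 0 + (2 * a 0 + (a 0 * Real.log 3 + M)) := by
          have hc1 := key1 (N - 1)
          have hc2 := key2 N hN
          have hc3 : a N * ∫ t in (-(1/2) : ℝ)..(1/2), |dir N t|
              ≤ 2 * a 0 + (a 0 * Real.log 3 + M) := by
            calc a N * ∫ t in (-(1/2) : ℝ)..(1/2), |dir N t|
                ≤ a N * (2 + Real.log (2 * N + 1)) :=
                  mul_le_mul_of_nonneg_left (dirL1 N hN) (hpos N).le
              _ ≤ _ := key3 N hN
          exact add_le_add (add_le_add hc1 hc2) hc3
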